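/- Gaussian tail bound for the Neumann Green function on [0,1]: for every t > 0, every X > 0, and every r ∈ [0,1], ∫_{ {r' ∈ [0,1] : |r' − r| > X} } G_t^{neum}(r,r') dr' ≤ √2 · e^{−X²/(4t)}. -/

import Mathlib

open MeasureTheory
open ENNReal

noncomputable section

/-- `Ff u r = F(r;u) = ∫_r^1 u(r') dr'` for a density `u : ℝ → ℝ`. -/
def Ff (u : ℝ → ℝ) (r : ℝ) : ℝ := ∫ s in r..1, u s

/-- Elements of `𝒰` are encoded as pairs `(c, ρ)` representing the measure `c·D₀ + ρ(r)dr`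
on `[0,1]`.  `Fm u r = F(r; c·D₀ + ρ dr) = c·1_{0 ∈ [r,1]} + ∫_r^1 ρ`. -/
def Fm (u : ℝ × (ℝ → ℝ)) (r : ℝ) : ℝ :=
  (if r ≤ 0 then u.1 else 0) + Ff u.2 r

/-- The one-dimensional heat kernel `G_t(r,r')`. -/
def heatK (t r r' : ℝ) : ℝ :=
  Real.exp (-((r - r') ^ 2) / (2 * t)) / Real.sqrt (2 * Real.pi * t)

/-- The Green function of the heat equation on `[0,1]` with Neumann boundary conditions,
obtained by summing the heat kernel over the reflected images `2k + r'` and `2k - r'`. -/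
def Gneum (t r r' : ℝ) : ℝ :=
  ∑' k : ℤ, (heatK t r (2 * (k : ℝ) + r') + heatK t r (2 * (k : ℝ) - r'))

/-- `(G_t^{neum} * u)(r)` for `u = c·D₀ + ρ dr ∈ 𝒰`. -/
def Gconv (t : ℝ) (u : ℝ × (ℝ → ℝ)) (r : ℝ) : ℝ :=
  u.1 * Gneum t r 0 + ∫ s in (0:ℝ)..1, Gneum t r s * u.2 s

/-- `R_δ(u) = inf {r : F(r;u) = jδ}`; the parameter `m` stands for the mass `jδ`. -/
def Rdel (m : ℝ) (u : ℝ × (ℝ → ℝ)) : ℝ := sInf {r : ℝ | Fm u r = m}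

/-- The cut-and-paste operator `K^{(δ)} u = jδ·D₀ + 1_{[0,R_δ(u)]} u`;
the parameter `m` stands for `jδ`. -/
def Kop (m : ℝ) (u : ℝ × (ℝ → ℝ)) : ℝ × (ℝ → ℝ) :=
  (m + u.1, fun r => if r ≤ Rdel m u then u.2 r else 0)

/-- The upper barrier `S_{nδ}^{(δ,+)}(u)` (an `L^∞` function for each `n`):
`S₀ = u`, `S_{nδ} = G_δ^{neum} * (K^{(δ)} S_{(n-1)δ})`. -/
def Splus (j δ : ℝ) (u : ℝ → ℝ) : ℕ → ℝ → ℝ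
  | 0 => u
  | n + 1 => Gconv δ (Kop (j * δ) (0, Splus j δ u n))

/-- The lower barrier `S_{nδ}^{(δ,−)}(u)` (an element of `𝒰` for each `n`):
`S₀ = u`, `S_{nδ} = K^{(δ)} (G_δ^{neum} * S_{(n-1)δ})`. -/
def Sminus (j δ : ℝ) (u : ℝ → ℝ) : ℕ → ℝ × (ℝ → ℝ)
  | 0 => (0, u)
  | n + 1 => Kop (j * δ) (0, Gconv δ (Sminus j δ u n))

/-- Total variation `|u − v|₁ = |c_u − c_v| + ∫₀¹ |ρ_u − ρ_v|` of the difference of two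
elements of `𝒰`. -/
def tvDist (u v : ℝ × (ℝ → ℝ)) : ℝ :=
  |u.1 - v.1| + ∫ s in (0:ℝ)..1, |u.2 s - v.2 s|

/-- `u ∈ L^∞([0,1]; ℝ≥0)`: measurable, nonnegative and bounded on `[0,1]`. -/
def IsAdmissible (v : ℝ → ℝ) : Prop :=
  Measurable v ∧ (∀ r ∈ Set.Icc (0:ℝ) 1, 0 ≤ v r) ∧
    ∃ C : ℝ, ∀ r ∈ Set.Icc (0:ℝ) 1, |v r| ≤ C

/-- Membership in `𝒰`: `u = c·D₀ + ρ dr` with `c ≥ 0`, `ρ ∈ L^∞([0,1]; ℝ≥0)`. -/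
def InU (u : ℝ × (ℝ → ℝ)) : Prop :=
  0 ≤ u.1 ∧ IsAdmissible u.2

/-- Membership in `𝒰_δ = {u = c·D₀ + ρ ∈ 𝒰 : F(0;ρ) > jδ}`; `m` stands for `jδ`. -/
def InUdelta (m : ℝ) (u : ℝ × (ℝ → ℝ)) : Prop :=
  InU u ∧ m < Ff u.2 0

/-- The family `(v t)_{t>0}` separates the barriers of `u`:
`S_{kδ}^{(δ,−)}(u) ≤ v (kδ) ≤ S_{kδ}^{(δ,+)}(u)` in the mass-transport order,
for every admissible `δ` and every positive integer `k`. -/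
def SeparatesBarriers (j : ℝ) (u : ℝ → ℝ) (v : ℝ → ℝ → ℝ) : Prop :=
  ∀ δ : ℝ, 0 < δ → j * δ < Ff u 0 → ∀ k : ℕ, 0 < k →
    ∀ r ∈ Set.Icc (0:ℝ) 1,
      Fm (Sminus j δ u k) r ≤ Ff (v ((k : ℝ) * δ)) r ∧
        Ff (v ((k : ℝ) * δ)) r ≤ Ff (Splus j δ u k) r

end

lemma aux_sq (r r' : ℝ) (hr0 : 0 ≤ r) (hr1 : r ≤ 1) (h0 : 0 ≤ r') (h1 : r' ≤ 1) (k : ℤ) :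
    (r' - r)^2 ≤ (2*(k:ℝ) + r' - r)^2 ∧ (r' - r)^2 ≤ (2*(k:ℝ) - r' - r)^2 := by
  rcases lt_trichotomy k 0 with hk | hk | hk
  · have hk' : (k:ℝ) ≤ -1 := by exact_mod_cast Int.le_sub_one_of_lt hk
    constructor
    · nlinarith [mul_nonneg (by linarith : (0:ℝ) ≤ -(k:ℝ)) (by linarith : (0:ℝ) ≤ -((k:ℝ) + r' - r))]
    · nlinarith [mul_nonneg (by linarith : (0:ℝ) ≤ r - (k:ℝ)) (by linarith : (0:ℝ) ≤ r' - (k:ℝ))]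
  · subst hk
    constructor
    · norm_num
    · push_cast; nlinarith [mul_nonneg hr0 h0]
  · have hk' : (1:ℝ) ≤ (k:ℝ) := by exact_mod_cast hk
    constructor
    · nlinarith [mul_nonneg (by linarith : (0:ℝ) ≤ (k:ℝ)) (by linarith : (0:ℝ) ≤ (k:ℝ) + r' - r)]
    · nlinarith [mul_nonneg (by linarith : (0:ℝ) ≤ (k:ℝ) - r) (by linarith : (0:ℝ) ≤ (k:ℝ) - r')]

lemma aux_heat_le (t X r s : ℝ) (ht : 0 < t) (h : X^2 ≤ (r - s)^2) :
    heatK t r s ≤ Real.exp (-(X^2)/(4*t)) *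
      (Real.exp (-((r-s)^2)/(4*t)) / Real.sqrt (2*Real.pi*t)) := by
  have hπ := Real.pi_pos
  have hs : 0 < Real.sqrt (2*Real.pi*t) := Real.sqrt_pos.mpr (by positivity)
  have key : Real.exp (-((r-s)^2)/(2*t)) ≤
      Real.exp (-(X^2)/(4*t)) * Real.exp (-((r-s)^2)/(4*t)) := by
    rw [← Real.exp_add]
    apply Real.exp_le_exp.mpr
    have he : -((r-s)^2)/(2*t) = -((r-s)^2)/(4*t) + -((r-s)^2)/(4*t) := by
      field_simp; ring
    have h2 : -((r-s)^2)/(4*t) ≤ -(X^2)/(4*t) := by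
      gcongr
    linarith [he ▸ (le_refl (-((r-s)^2)/(2*t)))]
  calc heatK t r s = Real.exp (-((r-s)^2)/(2*t)) / Real.sqrt (2*Real.pi*t) := rfl
    _ ≤ (Real.exp (-(X^2)/(4*t)) * Real.exp (-((r-s)^2)/(4*t))) / Real.sqrt (2*Real.pi*t) := by
        gcongr
    _ = _ := by ring

lemma aux_integrable (t r : ℝ) (ht : 0 < t) :
    Integrable (fun s : ℝ => Real.exp (-((r - s)^2)/(4*t)) / Real.sqrt (2*Real.pi*t)) := by
  have h0 : Integrable (fun x : ℝ => Real.exp (-(1/(4*t)) * x^2)) :=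
    integrable_exp_neg_mul_sq (by positivity)
  have h2 := (h0.comp_sub_right r).div_const (Real.sqrt (2*Real.pi*t))
  convert h2 using 2 with s
  congr 1
  field_simp
  ring

lemma aux_integral (t r : ℝ) (ht : 0 < t) :
    ∫ s : ℝ, Real.exp (-((r - s)^2)/(4*t)) / Real.sqrt (2*Real.pi*t) = Real.sqrt 2 := by
  have hπ := Real.pi_pos
  have hs : 0 < Real.sqrt (2*Real.pi*t) := Real.sqrt_pos.mpr (by positivity)
  have h1 : ∀ s : ℝ, Real.exp (-((r - s)^2)/(4*t)) = Real.exp (-(1/(4*t)) * (s - r)^2) := by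
    intro s; congr 1; field_simp; ring
  rw [integral_div]
  have h2 : (∫ s : ℝ, Real.exp (-((r - s)^2)/(4*t)))
      = ∫ x : ℝ, Real.exp (-(1/(4*t)) * x^2) := by
    simp_rw [h1]
    exact integral_sub_right_eq_self (fun x : ℝ => Real.exp (-(1/(4*t)) * x^2)) r
  rw [h2, integral_gaussian]
  have h3 : Real.pi / (1/(4*t)) = 2 * (2*Real.pi*t) := by field_simp; ring
  rw [h3, Real.sqrt_mul (by norm_num), mul_div_assoc, div_self hs.ne', mul_one]

set_option maxHeartbeats 1000000 in
lemma aux_tile (t r : ℝ) (ht : 0 < t) :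
    ∑' k : ℤ, ((∫⁻ x in Set.Icc (0:ℝ) 1,
        ENNReal.ofReal (Real.exp (-((r - (2*(k:ℝ) + x))^2)/(4*t)) / Real.sqrt (2*Real.pi*t)))
      + ∫⁻ x in Set.Icc (0:ℝ) 1,
        ENNReal.ofReal (Real.exp (-((r - (2*(k:ℝ) - x))^2)/(4*t)) / Real.sqrt (2*Real.pi*t)))
      ≤ ENNReal.ofReal (Real.sqrt 2) := by
  set G : ℝ → ℝ≥0∞ :=
    fun s => ENNReal.ofReal (Real.exp (-((r - s)^2)/(4*t)) / Real.sqrt (2*Real.pi*t)) with hG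
  have hgm : Measurable (fun s : ℝ =>
      Real.exp (-((r - s)^2)/(4*t)) / Real.sqrt (2*Real.pi*t)) := by fun_prop
  have hGm : Measurable G := hgm.ennreal_ofReal
  have step1 : ∀ k : ℤ, (∫⁻ x in Set.Icc (0:ℝ) 1, G (2*(k:ℝ) + x))
      = ∫⁻ y in Set.Icc (2*(k:ℝ)) (2*(k:ℝ)+1), G y := by
    intro k
    have h := (measurePreserving_add_left volume (2*(k:ℝ))).setLIntegral_comp_preimage_emb
      (measurableEmbedding_addLeft (2*(k:ℝ))) G (Set.Icc (2*(k:ℝ)) (2*(k:ℝ)+1))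
    have hset : (fun x => 2*(k:ℝ) + x) ⁻¹' Set.Icc (2*(k:ℝ)) (2*(k:ℝ)+1) = Set.Icc 0 1 := by
      rw [Set.preimage_const_add_Icc]; congr 1 <;> ring
    rw [hset] at h
    exact h
  have step2 : ∀ k : ℤ, (∫⁻ x in Set.Icc (0:ℝ) 1, G (2*(k:ℝ) - x))
      = ∫⁻ y in Set.Icc (2*(k:ℝ)-1) (2*(k:ℝ)), G y := by
    intro k
    have h := (Measure.measurePreserving_sub_left volume (2*(k:ℝ))).setLIntegral_comp_preimage_emb
      (MeasurableEquiv.subLeft (2*(k:ℝ))).measurableEmbedding G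
      (Set.Icc (2*(k:ℝ)-1) (2*(k:ℝ)))
    have hset : (fun x => 2*(k:ℝ) - x) ⁻¹' Set.Icc (2*(k:ℝ)-1) (2*(k:ℝ)) = Set.Icc 0 1 := by
      rw [Set.preimage_const_sub_Icc]; congr 1 <;> ring
    rw [hset] at h
    exact h
  have hIoc : ∀ a b : ℝ, (∫⁻ y in Set.Icc a b, G y) = ∫⁻ y in Set.Ioc a b, G y := by
    intro a b
    rw [← Measure.restrict_congr_set Ioc_ae_eq_Icc]
  have step3 : ∀ k : ℤ, ((∫⁻ x in Set.Icc (0:ℝ) 1, G (2*(k:ℝ) + x))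
      + ∫⁻ x in Set.Icc (0:ℝ) 1, G (2*(k:ℝ) - x))
      = ∫⁻ y in Set.Ioc (2*(k:ℝ)-1) (2*(k:ℝ)+1), G y := by
    intro k
    rw [step1 k, step2 k, hIoc, hIoc, add_comm,
      ← lintegral_union measurableSet_Ioc (Set.Ioc_disjoint_Ioc_of_le le_rfl),
      Set.Ioc_union_Ioc_eq_Ioc (by linarith) (by linarith)]
  calc ∑' k : ℤ, ((∫⁻ x in Set.Icc (0:ℝ) 1, G (2*(k:ℝ) + x))
        + ∫⁻ x in Set.Icc (0:ℝ) 1, G (2*(k:ℝ) - x))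
      = ∑' k : ℤ, ∫⁻ y in Set.Ioc (2*(k:ℝ)-1) (2*(k:ℝ)+1), G y := by
        exact tsum_congr step3
    _ = ∫⁻ y in ⋃ k : ℤ, Set.Ioc (2*(k:ℝ)-1) (2*(k:ℝ)+1), G y := by
        refine (lintegral_iUnion (fun k => measurableSet_Ioc) ?_ G).symm
        intro i j hij
        simp only [Function.onFun]
        rw [Set.Ioc_disjoint_Ioc]
        rcases hij.lt_or_gt with h | h
        · have hij' : (i:ℝ) + 1 ≤ (j:ℝ) := by exact_mod_cast h
          calc min (2*(i:ℝ)+1) (2*(j:ℝ)+1) ≤ 2*(i:ℝ)+1 := min_le_left _ _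
            _ ≤ 2*(j:ℝ)-1 := by linarith
            _ ≤ max (2*(i:ℝ)-1) (2*(j:ℝ)-1) := le_max_right _ _
        · have hij' : (j:ℝ) + 1 ≤ (i:ℝ) := by exact_mod_cast h
          calc min (2*(i:ℝ)+1) (2*(j:ℝ)+1) ≤ 2*(j:ℝ)+1 := min_le_right _ _
            _ ≤ 2*(i:ℝ)-1 := by linarith
            _ ≤ max (2*(i:ℝ)-1) (2*(j:ℝ)-1) := le_max_left _ _
    _ ≤ ∫⁻ y, G y := by
        exact setLIntegral_le_lintegral _ _
    _ = ENNReal.ofReal (Real.sqrt 2) := by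
        rw [← aux_integral t r ht]
        exact (ofReal_integral_eq_lintegral_ofReal (aux_integrable t r ht)
          (ae_of_all _ fun s => by positivity)).symm

lemma aux_heatK_nonneg (t r s : ℝ) : 0 ≤ heatK t r s := by
  unfold heatK; positivity

set_option maxHeartbeats 1000000 in
/-- Gaussian tail bound for the Neumann Green function on `[0,1]`:
`∫_{r' ∈ [0,1], |r'−r| > X} G_t^{neum}(r,r') dr' ≤ √2 · e^{−X²/(4t)}`. -/
theorem stmt_15 (t X : ℝ) (ht : 0 < t) (hX : 0 < X) (r : ℝ) (hr : r ∈ Set.Icc (0:ℝ) 1) :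
    (∫ r' in Set.Icc (0:ℝ) 1 ∩ {r' : ℝ | X < |r' - r|}, Gneum t r r') ≤
      Real.sqrt 2 * Real.exp (-(X ^ 2) / (4 * t)) := by
  obtain ⟨hr0, hr1⟩ := hr
  have hπ := Real.pi_pos
  set S : Set ℝ := Set.Icc (0:ℝ) 1 ∩ {r' : ℝ | X < |r' - r|} with hS
  have hRHS : (0:ℝ) ≤ Real.sqrt 2 * Real.exp (-(X ^ 2) / (4 * t)) := by positivity
  by_cases hint : Integrable (fun r' => Gneum t r r') (volume.restrict S)
  swap
  · rw [integral_undef hint]; exact hRHS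
  have hC0 : (0:ℝ) ≤ Real.exp (-(X ^ 2) / (4 * t)) := (Real.exp_pos _).le
  set u : ℝ → ℝ := fun s => Real.exp (-(X ^ 2) / (4 * t)) *
    (Real.exp (-((r - s)^2)/(4*t)) / Real.sqrt (2*Real.pi*t)) with hu
  have hum : Measurable u := by rw [hu]; fun_prop
  have hunn : ∀ s, 0 ≤ u s := fun s => by rw [hu]; positivity
  set G : ℝ → ℝ≥0∞ :=
    fun s => ENNReal.ofReal (Real.exp (-((r - s)^2)/(4*t)) / Real.sqrt (2*Real.pi*t)) with hG
  have hGm : Measurable G := by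
    rw [hG]
    exact Measurable.ennreal_ofReal (by fun_prop)
  have hofu : ∀ s, ENNReal.ofReal (u s) = ENNReal.ofReal (Real.exp (-(X ^ 2) / (4 * t))) * G s :=
    fun s => by rw [hu, hG]; exact ENNReal.ofReal_mul hC0
  set B : ℝ → ℝ≥0∞ := fun r' => ∑' k : ℤ,
    (ENNReal.ofReal (u (2*(k:ℝ) + r')) + ENNReal.ofReal (u (2*(k:ℝ) - r'))) with hB
  have hkm : ∀ k : ℤ, Measurable (fun r' : ℝ =>
      ENNReal.ofReal (u (2*(k:ℝ) + r')) + ENNReal.ofReal (u (2*(k:ℝ) - r'))) := fun k =>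
    ((hum.comp (measurable_const.add measurable_id)).ennreal_ofReal.add
      (hum.comp (measurable_const.sub measurable_id)).ennreal_ofReal)
  have hBmeas : Measurable B := by rw [hB]; exact Measurable.ennreal_tsum hkm
  -- pointwise bound on S
  have hpt : ∀ r' ∈ S, ENNReal.ofReal (Gneum t r r') ≤ B r' := by
    intro r' hr'
    obtain ⟨⟨h0', h1'⟩, hXlt⟩ := hr'
    have hXlt' : X < |r' - r| := hXlt
    have hx2 : X^2 ≤ (r' - r)^2 := by
      have h := abs_nonneg (r' - r)
      nlinarith [sq_abs (r' - r)]
    have hterm : ∀ k : ℤ, heatK t r (2*(k:ℝ) + r') + heatK t r (2*(k:ℝ) - r')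
        ≤ u (2*(k:ℝ) + r') + u (2*(k:ℝ) - r') := by
      intro k
      obtain ⟨hk1, hk2⟩ := aux_sq r r' hr0 hr1 h0' h1' k
      have e1 : X^2 ≤ (r - (2*(k:ℝ) + r'))^2 := by nlinarith
      have e2 : X^2 ≤ (r - (2*(k:ℝ) - r'))^2 := by nlinarith
      have b1 := aux_heat_le t X r (2*(k:ℝ) + r') ht e1
      have b2 := aux_heat_le t X r (2*(k:ℝ) - r') ht e2
      rw [hu]
      exact add_le_add b1 b2
    have hofr : ENNReal.ofReal (Gneum t r r') ≤
        ∑' k : ℤ, ENNReal.ofReal (heatK t r (2*(k:ℝ) + r') + heatK t r (2*(k:ℝ) - r')) := by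
      by_cases hsum : Summable (fun k : ℤ =>
          heatK t r (2*(k:ℝ) + r') + heatK t r (2*(k:ℝ) - r'))
      · rw [Gneum, ENNReal.ofReal_tsum_of_nonneg
          (fun k => add_nonneg (aux_heatK_nonneg _ _ _) (aux_heatK_nonneg _ _ _)) hsum]
      · rw [Gneum, tsum_eq_zero_of_not_summable hsum]
        simp
    refine hofr.trans (ENNReal.tsum_le_tsum fun k => ?_)
    calc ENNReal.ofReal (heatK t r (2*(k:ℝ) + r') + heatK t r (2*(k:ℝ) - r'))
        ≤ ENNReal.ofReal (u (2*(k:ℝ) + r') + u (2*(k:ℝ) - r')) :=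
          ENNReal.ofReal_le_ofReal (hterm k)
      _ = ENNReal.ofReal (u (2*(k:ℝ) + r')) + ENNReal.ofReal (u (2*(k:ℝ) - r')) :=
          ENNReal.ofReal_add (hunn _) (hunn _)
  -- main chain in ℝ≥0∞
  have hGnnae : 0 ≤ᵐ[volume.restrict S] fun r' => Gneum t r r' :=
    ae_of_all _ fun r' => tsum_nonneg fun k =>
      add_nonneg (aux_heatK_nonneg _ _ _) (aux_heatK_nonneg _ _ _)
  have h1 : ENNReal.ofReal (∫ r' in S, Gneum t r r')
      = ∫⁻ r' in S, ENNReal.ofReal (Gneum t r r') :=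
    ofReal_integral_eq_lintegral_ofReal hint hGnnae
  have hsub : S ⊆ Set.Icc 0 1 := Set.inter_subset_left
  have h4 : ∀ k : ℤ, (∫⁻ r' in S,
      (ENNReal.ofReal (u (2*(k:ℝ) + r')) + ENNReal.ofReal (u (2*(k:ℝ) - r'))))
      ≤ ENNReal.ofReal (Real.exp (-(X ^ 2) / (4 * t))) *
        ((∫⁻ x in Set.Icc (0:ℝ) 1, G (2*(k:ℝ) + x)) +
          ∫⁻ x in Set.Icc (0:ℝ) 1, G (2*(k:ℝ) - x)) := by
    intro k
    calc (∫⁻ r' in S,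
        (ENNReal.ofReal (u (2*(k:ℝ) + r')) + ENNReal.ofReal (u (2*(k:ℝ) - r'))))
        ≤ ∫⁻ r' in Set.Icc (0:ℝ) 1,
          (ENNReal.ofReal (u (2*(k:ℝ) + r')) + ENNReal.ofReal (u (2*(k:ℝ) - r'))) :=
          lintegral_mono_set hsub
      _ = ∫⁻ r' in Set.Icc (0:ℝ) 1, ENNReal.ofReal (Real.exp (-(X ^ 2) / (4 * t))) *
          (G (2*(k:ℝ) + r') + G (2*(k:ℝ) - r')) := by
          simp_rw [hofu, mul_add]
      _ = ENNReal.ofReal (Real.exp (-(X ^ 2) / (4 * t))) *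
          ∫⁻ r' in Set.Icc (0:ℝ) 1, (G (2*(k:ℝ) + r') + G (2*(k:ℝ) - r')) := by
          rw [lintegral_const_mul _ (show Measurable fun r' : ℝ =>
            G (2*(k:ℝ) + r') + G (2*(k:ℝ) - r') from
            ((hGm.comp (measurable_const.add measurable_id)).add
              (hGm.comp (measurable_const.sub measurable_id))))]
      _ = ENNReal.ofReal (Real.exp (-(X ^ 2) / (4 * t))) *
          ((∫⁻ x in Set.Icc (0:ℝ) 1, G (2*(k:ℝ) + x)) +
            ∫⁻ x in Set.Icc (0:ℝ) 1, G (2*(k:ℝ) - x)) := by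
          rw [lintegral_add_left (show Measurable fun x : ℝ => G (2*(k:ℝ) + x) from
            hGm.comp (measurable_const.add measurable_id))]
  have hchain : ∫⁻ r' in S, ENNReal.ofReal (Gneum t r r')
      ≤ ENNReal.ofReal (Real.exp (-(X ^ 2) / (4 * t))) * ENNReal.ofReal (Real.sqrt 2) := by
    calc ∫⁻ r' in S, ENNReal.ofReal (Gneum t r r')
        ≤ ∫⁻ r' in S, B r' := setLIntegral_mono hBmeas hpt
      _ = ∑' k : ℤ, ∫⁻ r' in S,
          (ENNReal.ofReal (u (2*(k:ℝ) + r')) + ENNReal.ofReal (u (2*(k:ℝ) - r'))) := by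
          rw [hB]; exact lintegral_tsum fun k => (hkm k).aemeasurable
      _ ≤ ∑' k : ℤ, ENNReal.ofReal (Real.exp (-(X ^ 2) / (4 * t))) *
          ((∫⁻ x in Set.Icc (0:ℝ) 1, G (2*(k:ℝ) + x)) +
            ∫⁻ x in Set.Icc (0:ℝ) 1, G (2*(k:ℝ) - x)) := ENNReal.tsum_le_tsum h4
      _ = ENNReal.ofReal (Real.exp (-(X ^ 2) / (4 * t))) *
          ∑' k : ℤ, ((∫⁻ x in Set.Icc (0:ℝ) 1, G (2*(k:ℝ) + x)) +
            ∫⁻ x in Set.Icc (0:ℝ) 1, G (2*(k:ℝ) - x)) := ENNReal.tsum_mul_left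
      _ ≤ ENNReal.ofReal (Real.exp (-(X ^ 2) / (4 * t))) * ENNReal.ofReal (Real.sqrt 2) := by
          refine mul_le_mul_right ?_ _
          exact aux_tile t r ht
  have hfin : ENNReal.ofReal (∫ r' in S, Gneum t r r')
      ≤ ENNReal.ofReal (Real.sqrt 2 * Real.exp (-(X ^ 2) / (4 * t))) := by
    rw [h1]
    refine hchain.trans_eq ?_
    rw [← ENNReal.ofReal_mul hC0, mul_comm]
  exact (ENNReal.ofReal_le_ofReal_iff hRHS).mp hfin
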